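/- Let x = (x_n) and y = (y_n) be elements of ℓ∞ over 𝕂. Then x ⊥_B y if and only if 0 lies in the convex hull of the set { lim_𝒰 conj(x_n) y_n : 𝒰 an ultrafilter on ℕ with lim_𝒰 |x_n| = ‖x‖ }. -/

import Mathlib

open Filter ENNReal

lemma aux_pad_sum {ι κ γ : Type*} [Fintype ι] [Fintype κ] [AddCommMonoid γ]
    (e : ι ↪ κ) (F : κ → γ) (h0 : ∀ j, (¬∃ i, e i = j) → F j = 0) :
    ∑ j, F j = ∑ i, F (e i) := by
  rw [← Finset.sum_map Finset.univ e F]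
  refine (Finset.sum_subset (Finset.subset_univ _) ?_).symm
  intro j _ hj
  exact h0 j (by simpa [Finset.mem_map] using hj)

lemma aux_isCompact_convexHull {E : Type*} [NormedAddCommGroup E] [NormedSpace ℝ E]
    [FiniteDimensional ℝ E] {s : Set E} (hs : IsCompact s) : IsCompact (convexHull ℝ s) := by
  classical
  rcases s.eq_empty_or_nonempty with rfl | ⟨s₀, hs₀⟩
  · simpa using isCompact_empty
  set N := Module.finrank ℝ E + 1 with hN
  have hK : IsCompact ((stdSimplex ℝ (Fin N)) ×ˢ (Set.univ.pi fun _ : Fin N => s)) :=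
    IsCompact.prod (isCompact_stdSimplex (𝕜 := ℝ) (ι := Fin N)) (isCompact_univ_pi fun _ => hs)
  have hφ : Continuous fun p : (Fin N → ℝ) × (Fin N → E) => ∑ i, p.1 i • p.2 i := by
    refine continuous_finset_sum _ fun i _ => ?_
    exact ((continuous_apply i).comp continuous_fst).smul ((continuous_apply i).comp continuous_snd)
  have himg : convexHull ℝ s = (fun p : (Fin N → ℝ) × (Fin N → E) => ∑ i, p.1 i • p.2 i) ''
      ((stdSimplex ℝ (Fin N)) ×ˢ (Set.univ.pi fun _ : Fin N => s)) := by
    apply Set.Subset.antisymm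
    · intro v hv
      obtain ⟨ι, hι, z, w, hzs, hai, hw0, hw1, hx⟩ := eq_pos_convex_span_of_mem_convexHull hv
      have hcard : Fintype.card ι ≤ N :=
        hai.card_le_finrank_succ.trans (add_le_add_left (Submodule.finrank_le _) 1)
      obtain ⟨e⟩ : Nonempty (ι ↪ Fin N) :=
        Function.Embedding.nonempty_iff_card_le.2 (by simpa using hcard)
      set W : Fin N → ℝ := fun j => if h : ∃ i, e i = j then w h.choose else 0 with hW
      set Z : Fin N → E := fun j => if h : ∃ i, e i = j then z h.choose else s₀ with hZ
      have hWe : ∀ i : ι, W (e i) = w i := by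
        intro i
        have h : ∃ i', e i' = e i := ⟨i, rfl⟩
        simp only [hW, dif_pos h]
        exact congrArg w (e.injective h.choose_spec)
      have hZe : ∀ i : ι, Z (e i) = z i := by
        intro i
        have h : ∃ i', e i' = e i := ⟨i, rfl⟩
        simp only [hZ, dif_pos h]
        exact congrArg z (e.injective h.choose_spec)
      have hW0 : ∀ j, (¬∃ i, e i = j) → W j = 0 := by
        intro j hj; simp [hW, dif_neg hj]
      refine ⟨(W, Z), ⟨⟨fun j => ?_, ?_⟩, fun j _ => ?_⟩, ?_⟩
      · by_cases h : ∃ i, e i = j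
        · simp only [hW, dif_pos h]; exact (hw0 _).le
        · simp [hW, dif_neg h]
      · rw [aux_pad_sum e W hW0]
        simpa [hWe] using hw1
      · by_cases h : ∃ i, e i = j
        · simp only [hZ, dif_pos h]; exact hzs ⟨_, rfl⟩
        · simp only [hZ, dif_neg h]; exact hs₀
      · have := aux_pad_sum e (fun j => W j • Z j) (fun j hj => by rw [hW0 j hj, zero_smul])
        dsimp only at this ⊢
        rw [this]
        simpa [hWe, hZe] using hx
    · rintro v ⟨⟨W, Z⟩, ⟨hWs, hZs⟩, rfl⟩
      have h1 : ∑ j, W j = 1 := hWs.2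
      have := Finset.centerMass_mem_convexHull (Finset.univ : Finset (Fin N))
        (fun j _ => hWs.1 j) (by rw [h1]; norm_num)
        (fun j _ => hZs j (Set.mem_univ j))
      rwa [Finset.centerMass, h1, inv_one, one_smul] at this
  rw [himg]
  exact hK.image hφ


lemma aux_rep {𝕂 : Type*} [RCLike 𝕂] (f : 𝕂 →L[ℝ] ℝ) (zz : 𝕂) :
    RCLike.re ((((f 1 : ℝ) : 𝕂) - ((f (RCLike.I) : ℝ) : 𝕂) * RCLike.I) * zz) = f zz := by
  have hzz : zz = RCLike.re zz • (1:𝕂) + RCLike.im zz • (RCLike.I : 𝕂) := by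
    rw [RCLike.real_smul_eq_coe_mul, RCLike.real_smul_eq_coe_mul, mul_one]
    exact (RCLike.re_add_im zz).symm
  conv_rhs => rw [hzz]
  rw [map_add, map_smul, map_smul, smul_eq_mul, smul_eq_mul]
  rw [sub_mul, map_sub, RCLike.mul_re, RCLike.mul_re, RCLike.mul_re, RCLike.mul_im]
  simp only [RCLike.ofReal_re, RCLike.ofReal_im, RCLike.I_re, zero_mul, mul_zero, sub_zero,
    zero_sub, add_zero, zero_add]
  have h1 : RCLike.im (RCLike.I : 𝕂) * RCLike.im zz = RCLike.im zz := RCLike.I_im' zz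
  linear_combination (f RCLike.I) * h1


set_option maxHeartbeats 1000000 in
theorem ellInfty_BJ_orthogonality {𝕂 : Type*} [RCLike 𝕂]
    (x y : lp (fun _ : ℕ => 𝕂) ∞) :
    (∀ lam : 𝕂, ‖x‖ ≤ ‖x + lam • y‖) ↔
      (0 : 𝕂) ∈ convexHull ℝ
        {z : 𝕂 | ∃ 𝒰 : Ultrafilter ℕ,
          Tendsto (fun n => ‖x n‖) (𝒰 : Filter ℕ) (nhds ‖x‖) ∧
          Tendsto (fun n => (starRingEnd 𝕂) (x n) * y n) (𝒰 : Filter ℕ) (nhds z)} := by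
  classical
  set S : Set 𝕂 := {z : 𝕂 | ∃ 𝒰 : Ultrafilter ℕ,
          Tendsto (fun n => ‖x n‖) (𝒰 : Filter ℕ) (nhds ‖x‖) ∧
          Tendsto (fun n => (starRingEnd 𝕂) (x n) * y n) (𝒰 : Filter ℕ) (nhds z)} with hSdef
  set w : ℕ → 𝕂 := fun n => (starRingEnd 𝕂) (x n) * y n with hwdef
  have hxn : ∀ n, ‖x n‖ ≤ ‖x‖ := fun n => lp.norm_apply_le_norm ENNReal.top_ne_zero x n
  have hyn : ∀ n, ‖y n‖ ≤ ‖y‖ := fun n => lp.norm_apply_le_norm ENNReal.top_ne_zero y n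
  have hcoord : ∀ (lam : 𝕂) (n : ℕ), (x + lam • y) n = x n + lam * y n := by
    intro lam n
    simp [lp.coeFn_add, lp.coeFn_smul, Pi.smul_apply, smul_eq_mul]
    rfl
  constructor
  · intro h
    by_contra h0
    rcases eq_or_lt_of_le (norm_nonneg x) with hR | hR
    · refine h0 (subset_convexHull ℝ S ?_)
      have hx0 : ∀ n, x n = 0 := by
        intro n
        have := hxn n
        rw [← hR] at this
        simpa using le_antisymm this (norm_nonneg _)
      refine ⟨(pure 0 : Ultrafilter ℕ), ?_, ?_⟩
      · have : (fun n => ‖x n‖) = fun _ => ‖x‖ := by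
          funext n; rw [hx0 n, ← hR, norm_zero]
        rw [this]; exact tendsto_const_nhds
      · have : (fun n => (starRingEnd 𝕂) (x n) * y n) = fun _ => (0 : 𝕂) := by
          funext n; rw [hx0 n, map_zero, zero_mul]
        rw [this]; exact tendsto_const_nhds
    -- now ‖x‖ > 0
    have hwb : ∀ n, ‖w n‖ ≤ ‖x‖ * ‖y‖ := by
      intro n
      rw [hwdef]
      calc ‖(starRingEnd 𝕂) (x n) * y n‖ = ‖x n‖ * ‖y n‖ := by
            rw [norm_mul, RCLike.norm_conj]
        _ ≤ ‖x‖ * ‖y‖ := mul_le_mul (hxn n) (hyn n) (norm_nonneg _) (norm_nonneg x)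
    have hSsub : S ⊆ Metric.closedBall 0 (‖x‖ * ‖y‖) := by
      rintro z ⟨𝒰, h1, h2⟩
      rw [Metric.mem_closedBall, dist_zero_right]
      exact le_of_tendsto h2.norm (Eventually.of_forall hwb)
    have hSeq : S = (fun z : 𝕂 => ((‖x‖ : ℝ), z)) ⁻¹'
        closure (Set.range (fun n => (‖x n‖, w n))) := by
      ext z
      constructor
      · rintro ⟨𝒰, h1, h2⟩
        exact mem_closure_of_tendsto (h1.prodMk_nhds h2)
          (Eventually.of_forall fun n => ⟨n, rfl⟩)
      · intro hz
        have hnb : NeBot (comap (fun n => ((‖x n‖ : ℝ), w n)) (nhds ((‖x‖ : ℝ), z))) := by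
          rw [Filter.comap_neBot_iff]
          intro U hU
          obtain ⟨p, hp1, hp2⟩ := mem_closure_iff_nhds.1 hz U hU
          obtain ⟨n, rfl⟩ := hp2
          exact ⟨n, hp1⟩
        set 𝒰 := Ultrafilter.of (comap (fun n => (‖x n‖, w n)) (nhds (‖x‖, z))) with hUd
        have hT : Tendsto (fun n => (‖x n‖, w n)) (𝒰 : Filter ℕ) (nhds (‖x‖, z)) :=
          (Filter.map_mono (Ultrafilter.of_le _)).trans Filter.map_comap_le
        exact ⟨𝒰, (continuous_fst.tendsto _).comp hT, (continuous_snd.tendsto _).comp hT⟩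
    have hSclosed : IsClosed S := by
      rw [hSeq]
      exact isClosed_closure.preimage (Continuous.prodMk_right _)
    have hScomp : IsCompact S :=
      (isCompact_closedBall (0 : 𝕂) (‖x‖ * ‖y‖)).of_isClosed_subset hSclosed hSsub
    obtain ⟨f, u, hfu, hu0⟩ := geometric_hahn_banach_closed_point
      (convex_convexHull ℝ S) (aux_isCompact_convexHull hScomp).isClosed h0
    have hu0' : u < 0 := by simpa using hu0
    set lam0 : 𝕂 := ((f 1 : ℝ) : 𝕂) - ((f RCLike.I : ℝ) : 𝕂) * RCLike.I with hlam0
    have hrep : ∀ zz : 𝕂, RCLike.re (lam0 * zz) = f zz := aux_rep f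
    have hδ : ∃ δ > 0, ∀ n, ‖x‖ - δ < ‖x n‖ → f (w n) ≤ u := by
      by_contra hc
      push_neg at hc
      set B : {δ : ℝ // 0 < δ} → Set ℕ :=
        fun δ => {n | ‖x‖ - δ.1 < ‖x n‖ ∧ u < f (w n)} with hB
      have hBne : ∀ δ, (B δ).Nonempty := by
        intro δ
        obtain ⟨n, hn1, hn2⟩ := hc δ.1 δ.2
        exact ⟨n, hn1, hn2⟩
      have hdir : Directed (· ≥ ·) fun δ => Filter.principal (B δ) := by
        intro p q
        refine ⟨⟨min p.1 q.1, lt_min p.2 q.2⟩, ?_, ?_⟩ <;>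
        · refine Filter.principal_mono.2 ?_
          intro n hn
          refine ⟨lt_of_le_of_lt ?_ hn.1, hn.2⟩
          refine sub_le_sub_left ?_ _
          first
          | exact min_le_left _ _
          | exact min_le_right _ _
      haveI hne : Nonempty {δ : ℝ // 0 < δ} := ⟨⟨1, one_pos⟩⟩
      haveI hFne : NeBot (⨅ δ, Filter.principal (B δ)) :=
        iInf_neBot_of_directed hdir fun δ => Filter.principal_neBot_iff.2 (hBne δ)
      set 𝒰 := Ultrafilter.of (⨅ δ, Filter.principal (B δ)) with hUdef
      have hUle : (𝒰 : Filter ℕ) ≤ ⨅ δ, Filter.principal (B δ) := Ultrafilter.of_le _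
      have hBU : ∀ δ, B δ ∈ 𝒰 := fun δ =>
        Filter.le_principal_iff.1 (hUle.trans (iInf_le _ δ))
      have h1 : Tendsto (fun n => ‖x n‖) (𝒰 : Filter ℕ) (nhds ‖x‖) := by
        rw [Metric.tendsto_nhds]
        intro ε hε
        filter_upwards [hBU ⟨ε, hε⟩] with n hn
        rw [Real.dist_eq, abs_lt]
        constructor
        · have := hn.1; simp only [hB] at this ⊢; linarith
        · linarith [hxn n, hε]
      obtain ⟨z, hzball, hzt⟩ := (isCompact_closedBall (0 : 𝕂) (‖x‖ * ‖y‖)).ultrafilter_le_nhds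
        (𝒰.map w) (by
          rw [Ultrafilter.coe_map, Filter.le_principal_iff, Filter.mem_map]
          refine Filter.univ_mem' fun n => ?_
          rw [Set.mem_preimage, Metric.mem_closedBall, dist_zero_right]
          exact hwb n)
      have hzS : z ∈ S := ⟨𝒰, h1, hzt⟩
      have hlt : f z < u := hfu z (subset_convexHull ℝ S hzS)
      have hge : u ≤ f z := by
        refine ge_of_tendsto ((f.continuous.tendsto z).comp hzt) ?_
        filter_upwards [hBU ⟨1, one_pos⟩] with n hn
        exact hn.2.le
      exact absurd hlt (not_lt.2 hge)
    obtain ⟨δ, hδpos, hA⟩ := hδ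
    set Cl := ‖lam0‖ * ‖y‖ with hCl
    have hCl0 : 0 ≤ Cl := mul_nonneg (norm_nonneg _) (norm_nonneg _)
    set t := min (δ / (2 * (Cl + 1))) ((-u) / (Cl * Cl + 1)) with ht
    have ht0 : 0 < t :=
      lt_min (by positivity) (div_pos (neg_pos.2 hu0') (by positivity))
    have ht1 : t * (Cl + 1) ≤ δ / 2 := by
      have h1 : t ≤ δ / (2 * (Cl + 1)) := min_le_left _ _
      have h2 : 0 < Cl + 1 := by linarith
      calc t * (Cl + 1) ≤ (δ / (2 * (Cl + 1))) * (Cl + 1) :=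
            mul_le_mul_of_nonneg_right h1 (by linarith)
        _ = δ / 2 := by field_simp
    have ht2 : t * (Cl * Cl + 1) ≤ -u := by
      have h1 : t ≤ (-u) / (Cl * Cl + 1) := min_le_right _ _
      have h2 : (0:ℝ) < Cl * Cl + 1 := by positivity
      calc t * (Cl * Cl + 1) ≤ ((-u) / (Cl * Cl + 1)) * (Cl * Cl + 1) := by nlinarith
        _ = -u := by field_simp
    set lam : 𝕂 := ((t : ℝ) : 𝕂) * lam0 with hlam
    have hlamyn : ∀ n, ‖lam * y n‖ ≤ t * Cl := by
      intro n
      rw [hlam, norm_mul, norm_mul, RCLike.norm_ofReal, abs_of_pos ht0, hCl, mul_assoc]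
      exact mul_le_mul_of_nonneg_left
        (mul_le_mul_of_nonneg_left (hyn n) (norm_nonneg lam0)) ht0.le
    have hkey : ∀ n, ‖x n + lam * y n‖ ≤
        max (Real.sqrt (‖x‖ ^ 2 + t * u)) (‖x‖ - δ / 2) := by
      intro n
      by_cases hn : ‖x‖ - δ < ‖x n‖
      · refine le_max_of_le_left ?_
        have hexp : ‖x n + lam * y n‖ ^ 2 = ‖x n‖ ^ 2
            + 2 * RCLike.re ((starRingEnd 𝕂) (x n) * (lam * y n)) + ‖lam * y n‖ ^ 2 := by
          have hnorm := @norm_add_sq 𝕂 𝕂 _ _ _ (x n) (lam * y n)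
          rwa [RCLike.inner_apply, mul_comm (lam * y n)] at hnorm
        have hre : RCLike.re ((starRingEnd 𝕂) (x n) * (lam * y n)) = t * f (w n) := by
          have e : (starRingEnd 𝕂) (x n) * (lam * y n) = ((t : ℝ) : 𝕂) * (lam0 * w n) := by
            rw [hlam, hwdef]; ring
          rw [e, RCLike.re_ofReal_mul, hrep]
        have hfn : f (w n) ≤ u := hA n hn
        have hb : ‖lam * y n‖ ^ 2 ≤ t * (t * (Cl * Cl)) := by
          nlinarith [hlamyn n, norm_nonneg (lam * y n)]
        have hsq : ‖x n + lam * y n‖ ^ 2 ≤ ‖x‖ ^ 2 + t * u := by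
          rw [hexp, hre]
          nlinarith [hxn n, norm_nonneg (x n)]
        calc ‖x n + lam * y n‖ = Real.sqrt (‖x n + lam * y n‖ ^ 2) :=
              (Real.sqrt_sq (norm_nonneg _)).symm
          _ ≤ Real.sqrt (‖x‖ ^ 2 + t * u) := Real.sqrt_le_sqrt hsq
      · refine le_max_of_le_right ?_
        push_neg at hn
        calc ‖x n + lam * y n‖ ≤ ‖x n‖ + ‖lam * y n‖ := norm_add_le _ _
          _ ≤ (‖x‖ - δ) + t * Cl := add_le_add hn (hlamyn n)
          _ ≤ ‖x‖ - δ / 2 := by nlinarith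
    have hnorm : ‖x + lam • y‖ ≤ max (Real.sqrt (‖x‖ ^ 2 + t * u)) (‖x‖ - δ / 2) := by
      refine lp.norm_le_of_forall_le (le_trans (Real.sqrt_nonneg _) (le_max_left _ _)) ?_
      intro n
      rw [hcoord]
      exact hkey n
    have hmax : max (Real.sqrt (‖x‖ ^ 2 + t * u)) (‖x‖ - δ / 2) < ‖x‖ := by
      apply max_lt
      · rw [Real.sqrt_lt' hR]
        nlinarith
      · linarith
    exact absurd (h lam) (not_le.2 (lt_of_le_of_lt hnorm hmax))
  · -- backward direction
    intro h lam
    rcases eq_or_lt_of_le (norm_nonneg x) with hR | hR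
    · calc ‖x‖ = 0 := hR.symm
        _ ≤ ‖x + lam • y‖ := norm_nonneg _
    rw [convexHull_eq] at h
    obtain ⟨ι, T, wt, zt, hw0, hw1, hz, hcm⟩ := h
    have hsum0 : ∑ i ∈ T, wt i • zt i = 0 := by
      rw [Finset.centerMass, hw1, inv_one, one_smul] at hcm
      exact hcm
    -- find a point with nonneg re (lam * z)
    have hex : ∃ i ∈ T, 0 < wt i ∧ 0 ≤ RCLike.re (lam * zt i) := by
      by_contra hcon
      push_neg at hcon
      have hterm : ∀ i ∈ T, wt i * RCLike.re (lam * zt i) ≤ 0 := by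
        intro i hi
        rcases eq_or_lt_of_le (hw0 i hi) with h0 | h0
        · rw [← h0, zero_mul]
        · exact (mul_neg_of_pos_of_neg h0 (hcon i hi h0)).le
      obtain ⟨i0, hi0, hwi0⟩ : ∃ i ∈ T, 0 < wt i := by
        by_contra hc
        push_neg at hc
        have : ∑ i ∈ T, wt i = 0 :=
          Finset.sum_eq_zero fun i hi => le_antisymm (hc i hi) (hw0 i hi)
        rw [hw1] at this; norm_num at this
      have hstrict : ∑ i ∈ T, wt i * RCLike.re (lam * zt i) < 0 := by
        have h2 : ∃ i ∈ T, wt i * RCLike.re (lam * zt i) < (0:ℝ) :=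
          ⟨i0, hi0, mul_neg_of_pos_of_neg hwi0 (hcon i0 hi0 hwi0)⟩
        have := Finset.sum_lt_sum hterm h2
        simpa using this
      have hzero : ∑ i ∈ T, wt i * RCLike.re (lam * zt i) = 0 := by
        have : ∑ i ∈ T, wt i * RCLike.re (lam * zt i)
            = RCLike.re (lam * ∑ i ∈ T, wt i • zt i) := by
          rw [Finset.mul_sum, map_sum]
          refine Finset.sum_congr rfl fun i _ => ?_
          rw [mul_smul_comm, RCLike.smul_re]
        rw [this, hsum0, mul_zero, map_zero]
      exact absurd hzero (ne_of_lt hstrict)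
    obtain ⟨i, hiT, hwi, hre⟩ := hex
    obtain ⟨𝒰, hU1, hU2⟩ := hz i hiT
    -- pointwise estimate
    have hpt : ∀ n, ‖x n‖ ^ 2 + RCLike.re (lam * w n) ≤ ‖x‖ * ‖x + lam • y‖ := by
      intro n
      have e1 : (starRingEnd 𝕂) (x n) * (x n + lam * y n)
          = ((‖x n‖ ^ 2 : ℝ) : 𝕂) + lam * w n := by
        rw [mul_add, RCLike.conj_mul, hwdef]; push_cast; ring
      have e2 : RCLike.re ((starRingEnd 𝕂) (x n) * (x n + lam * y n))
          = ‖x n‖ ^ 2 + RCLike.re (lam * w n) := by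
        rw [e1, map_add, RCLike.ofReal_re]
      rw [← e2]
      calc RCLike.re ((starRingEnd 𝕂) (x n) * (x n + lam * y n))
          ≤ ‖(starRingEnd 𝕂) (x n) * (x n + lam * y n)‖ := RCLike.re_le_norm _
        _ = ‖x n‖ * ‖x n + lam * y n‖ := by rw [norm_mul, RCLike.norm_conj]
        _ ≤ ‖x‖ * ‖x + lam • y‖ := by
            refine mul_le_mul (hxn n) ?_ (norm_nonneg _) (norm_nonneg x)
            rw [← hcoord lam n]
            exact lp.norm_apply_le_norm ENNReal.top_ne_zero _ n
    -- pass to the limit along 𝒰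
    have hlim : Tendsto (fun n => ‖x n‖ ^ 2 + RCLike.re (lam * w n)) (𝒰 : Filter ℕ)
        (nhds (‖x‖ ^ 2 + RCLike.re (lam * zt i))) := by
      have t1 : Tendsto (fun n => ‖x n‖ ^ 2) (𝒰 : Filter ℕ) (nhds (‖x‖ ^ 2)) :=
        ((continuous_pow 2).tendsto _).comp hU1
      have t2 : Tendsto (fun n => RCLike.re (lam * w n)) (𝒰 : Filter ℕ)
          (nhds (RCLike.re (lam * zt i))) :=
        (RCLike.continuous_re.tendsto _).comp (hU2.const_mul lam)
      exact t1.add t2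
    have hfinal : ‖x‖ ^ 2 + RCLike.re (lam * zt i) ≤ ‖x‖ * ‖x + lam • y‖ :=
      le_of_tendsto hlim (Eventually.of_forall hpt)
    have : ‖x‖ * ‖x‖ ≤ ‖x‖ * ‖x + lam • y‖ := by nlinarith
    exact le_of_mul_le_mul_left this hR
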